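/- For every p ∈ (0,1) and every real q > 0, the normalizing constant of the ℓ-random-cluster model satisfies Z_{p,q} = Σ_{Y ⊆ E} p^{|Y|}·(1−p)^{|E|−|Y|}·q^{κ−r(Y)} = (p/(1−p))^{κ−r(E)} · p^{r(E)} · (1−p)^{|E|−r(E)} · T(1 + q(1−p)/p, 1/(1−p)). -/

import Mathlib

open Finset

/-- The partition function of the `ℓ`-random-cluster model is expressed through
the (non-reduced) `ℓ`-Tutte polynomial:
`Z_{p,q} = (p/(1-p))^{κ-r(E)} p^{r(E)} (1-p)^{|E|-r(E)}
  T(1 + q(1-p)/p, 1/(1-p))`. -/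
theorem stmt_13 {K : Type*} [Field K] {E : Type*} [Fintype E] [DecidableEq E]
    {V : Type*} [AddCommGroup V] [Module K V] [FiniteDimensional K V]
    (bdry : (E → K) →ₗ[K] V)
    (r : Finset E → ℕ)
    (hr : ∀ F : Finset E, r F = Module.finrank K (Submodule.span K
      ((fun σ => bdry (Pi.single σ 1)) '' (F : Set E))))
    (κ : ℕ) (hκ : r Finset.univ ≤ κ)
    (T : ℝ → ℝ → ℝ)
    (hT : ∀ x y : ℝ, T x y =
      ∑ F : Finset E, (x - 1) ^ (κ - r F) * (y - 1) ^ (F.card - r F))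
    (p q : ℝ) (hp : p ∈ Set.Ioo (0 : ℝ) 1) (hq : 0 < q) :
    ∑ Y : Finset E,
        p ^ Y.card * (1 - p) ^ (Fintype.card E - Y.card) * q ^ (κ - r Y) =
      (p / (1 - p)) ^ (κ - r Finset.univ) * p ^ r Finset.univ *
        (1 - p) ^ (Fintype.card E - r Finset.univ) *
        T (1 + q * (1 - p) / p) (1 / (1 - p)) := by
  classical
  obtain ⟨hp0, hp1⟩ := hp
  have hp0' : p ≠ 0 := ne_of_gt hp0
  have h1p : (1 : ℝ) - p ≠ 0 := by linarith
  have hq0 : q ≠ 0 := ne_of_gt hq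
  set g : E → V := fun σ => bdry (Pi.single σ 1) with hg
  have hrcard : ∀ F : Finset E, r F ≤ F.card := by
    intro F
    rw [hr F, ← Finset.coe_image]
    exact le_trans (finrank_span_finset_le_card _) (Finset.card_image_le)
  have hrmono : ∀ F : Finset E, r F ≤ r Finset.univ := by
    intro F
    rw [hr F, hr Finset.univ]
    apply Submodule.finrank_mono
    apply Submodule.span_mono
    exact Set.image_mono (f := _) (by simp)
  have hEcard : r Finset.univ ≤ Fintype.card E := by
    simpa using hrcard Finset.univ
  rw [hT, Finset.mul_sum]
  apply Finset.sum_congr rfl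
  intro F _
  have hFκ : r F ≤ κ := le_trans (hrmono F) hκ
  have hFc : F.card ≤ Fintype.card E := Finset.card_le_univ F
  have hb1 : (1 : ℝ) + q * (1 - p) / p - 1 = q * (1 - p) / p := by ring
  have hb2 : (1 : ℝ) / (1 - p) - 1 = p / (1 - p) := by
    field_simp
    ring
  rw [hb1, hb2]
  rw [div_pow, div_pow, div_pow, mul_pow]
  rw [pow_sub₀ (1 - p) h1p hFc, pow_sub₀ q hq0 hFκ, pow_sub₀ p hp0' hκ,
    pow_sub₀ (1 - p) h1p hκ, pow_sub₀ (1 - p) h1p hEcard,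
    pow_sub₀ (1 - p) h1p hFκ, pow_sub₀ p hp0' hFκ,
    pow_sub₀ p hp0' (hrcard F), pow_sub₀ (1 - p) h1p (hrcard F)]
  field_simp
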